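/- arXiv:2005.13913 — 5 statements merged into one kernel-verified Lean document; each statement's English description precedes it below -/
import Mathlib

section
/- Let G be the unit disk graph on a finite set P of points in the plane. For any two vertices u, v ∈ P and any independent set X of G with u ∉ X and v ∉ X, we have |(N_G[u] ∪ N_G[v]) ∩ X| ≤ 10. -/
/-- Closed neighborhood of a vertex: the vertex together with its neighbors. -/
def closedNbhd {V : Type*} (G : SimpleGraph V) (v : V) : Set V :=
  {u | u = v ∨ G.Adj u v}

/-- `D` is a liar's dominating set of the vertex subset `A` in `G`. -/
def IsLDSOn {V : Type*} (G : SimpleGraph V) (A D : Set V) : Prop :=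
  (∀ v ∈ A, 2 ≤ (closedNbhd G v ∩ D).ncard) ∧
  (∀ u ∈ A, ∀ v ∈ A, u ≠ v →
    3 ≤ ((closedNbhd G u ∪ closedNbhd G v) ∩ D).ncard)

/-- `D` is a liar's dominating set of `G`. -/
def IsLDS {V : Type*} (G : SimpleGraph V) (D : Set V) : Prop :=
  IsLDSOn G Set.univ D

/-- `I` is an independent set of `G`. -/
def IsIndepSet {V : Type*} (G : SimpleGraph V) (I : Set V) : Prop :=
  ∀ u ∈ I, ∀ v ∈ I, u ≠ v → ¬ G.Adj u v

/-- `I` is a maximal independent set of the subgraph of `G` induced on `A`. -/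
def IsMaxIndepOn {V : Type*} (G : SimpleGraph V) (A I : Set V) : Prop :=
  I ⊆ A ∧ IsIndepSet G I ∧
    ∀ J, J ⊆ A → IsIndepSet G J → I ⊆ J → I = J

/-- `I` is a maximal independent set of `G`. -/
def IsMaxIndep {V : Type*} (G : SimpleGraph V) (I : Set V) : Prop :=
  IsMaxIndepOn G Set.univ I

/-- The unit disk graph on a finite set `P` of points in the plane: two distinct
points are adjacent iff their Euclidean distance is at most 1. -/
def unitDiskGraph (P : Finset (EuclideanSpace ℝ (Fin 2))) : SimpleGraph P where
  Adj p q := p ≠ q ∧ dist (p : EuclideanSpace ℝ (Fin 2)) (q : EuclideanSpace ℝ (Fin 2)) ≤ 1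
  symm := by
    constructor
    intro p q h
    exact ⟨h.1.symm, by rw [dist_comm]; exact h.2⟩
  loopless := by
    constructor
    intro p h
    exact h.1 rfl


noncomputable def toC (x : EuclideanSpace ℝ (Fin 2)) : ℂ := ⟨x 0, x 1⟩

lemma abs_toC_sub (x y : EuclideanSpace ℝ (Fin 2)) :
    ‖toC x - toC y‖ = dist x y := by
  rw [EuclideanSpace.dist_eq, Complex.norm_def, Complex.normSq_apply]
  simp only [toC, Complex.sub_re, Complex.sub_im, Fin.sum_univ_two, Real.dist_eq, sq_abs]
  congr 1
  ring

lemma re_mul_conj (z w : ℂ) (hz : z ≠ 0) (hw : w ≠ 0) :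
    (z * (starRingEnd ℂ) w).re
      = ‖z‖ * ‖w‖ * Real.cos (Complex.arg z - Complex.arg w) := by
  have hw' : (starRingEnd ℂ) w ≠ 0 := by simpa using hw
  have hzw : z * (starRingEnd ℂ) w ≠ 0 := mul_ne_zero hz hw'
  have h1 : ‖z * (starRingEnd ℂ) w‖ = ‖z‖ * ‖w‖ := by
    simp [map_mul]
  have h2 : Real.cos (Complex.arg (z * (starRingEnd ℂ) w))
      = Real.cos (Complex.arg z - Complex.arg w) := by
    rw [← Real.Angle.cos_coe, ← Real.Angle.cos_coe]
    congr 1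
    rw [Complex.arg_mul_coe_angle hz hw', Complex.arg_conj_coe_angle,
      Real.Angle.coe_sub, sub_eq_add_neg]
  have h3 := Complex.cos_arg hzw
  rw [h2, h1] at h3
  have hz' : 0 < ‖z‖ := norm_pos_iff.2 hz
  have hw'' : 0 < ‖w‖ := norm_pos_iff.2 hw
  have h4 : (z * (starRingEnd ℂ) w).re = z.re * w.re + z.im * w.im := by
    simp [Complex.mul_re]
  field_simp at h3
  rw [h4]
  linarith [h3]

lemma key (f : Fin 6 → ℂ) (h0 : ∀ i, f i ≠ 0) (h1 : ∀ i, ‖f i‖ ≤ 1)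
    (h2 : ∀ i j, i ≠ j → 1 < ‖f i - f j‖) : False := by
  have pi_pos := Real.pi_pos
  set θ : Fin 6 → ℝ := fun i => Complex.arg (f i) with hθ
  have hcos : ∀ i j, i ≠ j → Real.cos (θ i - θ j) < 1/2 := by
    intro i j hij
    by_contra hc
    push_neg at hc
    have hd := h2 i j hij
    have hsq : 1 < ‖f i - f j‖ ^ 2 := by
      nlinarith [norm_nonneg (f i - f j)]
    rw [Complex.sq_norm, Complex.normSq_sub, re_mul_conj _ _ (h0 i) (h0 j),
      ← Complex.sq_norm (f i), ← Complex.sq_norm (f j)] at hsq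
    set a := ‖f i‖
    set b := ‖f j‖
    have ha : 0 < a := norm_pos_iff.2 (h0 i)
    have hb : 0 < b := norm_pos_iff.2 (h0 j)
    have hab : 0 ≤ a * b * (2 * Real.cos (θ i - θ j) - 1) := by
      apply mul_nonneg (mul_nonneg ha.le hb.le); linarith
    nlinarith [mul_nonneg (sub_nonneg.2 (h1 i)) (sub_nonneg.2 (h1 j)),
      mul_nonneg ha.le (sub_nonneg.2 (h1 i)), mul_nonneg hb.le (sub_nonneg.2 (h1 j))]
  obtain ⟨i0, hi0⟩ := Finite.exists_min θ
  set φ : Fin 6 → ℝ := fun i => θ i - θ i0 with hφ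
  clear_value θ φ
  have hφ0 : ∀ i, 0 ≤ φ i := fun i => by simp only [hφ]; exact sub_nonneg.2 (hi0 i)
  have hφlt : ∀ i, φ i < 2 * Real.pi := by
    intro i
    have h1' : θ i ≤ Real.pi := by simp only [hθ]; exact Complex.arg_le_pi _
    have h2' : -Real.pi < θ i0 := by simp only [hθ]; exact Complex.neg_pi_lt_arg _
    simp only [hφ]
    linarith
  have hflt : ∀ i, (⌊φ i * 3 / Real.pi⌋ : ℤ).toNat < 6 := by
    intro i
    have : φ i * 3 / Real.pi < 6 := by
      rw [div_lt_iff₀ pi_pos]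
      nlinarith [hφlt i]
    have hf : ⌊φ i * 3 / Real.pi⌋ < 6 := by
      exact_mod_cast Int.floor_lt.2 (by exact_mod_cast this)
    omega
  set k : Fin 6 → Fin 6 := fun i => ⟨(⌊φ i * 3 / Real.pi⌋).toNat, hflt i⟩ with hk
  have hknn : ∀ i, 0 ≤ ⌊φ i * 3 / Real.pi⌋ := by
    intro i
    exact Int.floor_nonneg.2 (div_nonneg (by linarith [hφ0 i]) pi_pos.le)
  have hkinj : Function.Injective k := by
    intro i j hij
    by_contra hne
    have hfe : ⌊φ i * 3 / Real.pi⌋ = ⌊φ j * 3 / Real.pi⌋ := by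
      simp only [hk, Fin.mk.injEq] at hij
      have := hknn i; have := hknn j
      omega
    have habs : |φ i - φ j| < Real.pi / 3 := by
      have h1' := Int.floor_le (φ i * 3 / Real.pi)
      have h2' := Int.lt_floor_add_one (φ i * 3 / Real.pi)
      have h3' := Int.floor_le (φ j * 3 / Real.pi)
      have h4' := Int.lt_floor_add_one (φ j * 3 / Real.pi)
      rw [hfe] at h1' h2'
      have hab1 : φ i * 3 / Real.pi - φ j * 3 / Real.pi < 1 := by linarith
      have hab2 : φ j * 3 / Real.pi - φ i * 3 / Real.pi < 1 := by linarith
      rw [div_sub_div_same, div_lt_one pi_pos] at hab1 hab2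
      rw [abs_lt]
      constructor
      · linarith [hab2]
      · linarith [hab1]
    have hdiff : θ i - θ j = φ i - φ j := by simp only [hφ]; ring
    have : Real.cos (Real.pi / 3) < Real.cos |φ i - φ j| := by
      apply Real.strictAntiOn_cos ⟨abs_nonneg _, by linarith [habs]⟩
        ⟨by positivity, by linarith⟩ habs
    rw [Real.cos_pi_div_three, Real.cos_abs, ← hdiff] at this
    exact absurd (hcos i j hne) (by linarith)
  have hksurj : Function.Surjective k := Finite.surjective_of_injective hkinj
  obtain ⟨i, hi⟩ := hksurj ⟨5, by norm_num⟩
  have h5 : ⌊φ i * 3 / Real.pi⌋ = 5 := by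
    simp only [hk, Fin.mk.injEq] at hi
    have := hknn i
    omega
  have hφ5 : 5 * Real.pi / 3 ≤ φ i := by
    have := Int.floor_le (φ i * 3 / Real.pi)
    rw [h5] at this
    have h5' : (5:ℝ) ≤ φ i * 3 / Real.pi := by exact_mod_cast this
    rw [le_div_iff₀ pi_pos] at h5'
    linarith
  have hine : i ≠ i0 := by
    intro h
    rw [h] at hφ5
    have : φ i0 = 0 := by simp only [hφ]; ring
    rw [this] at hφ5
    nlinarith
  have hcc : Real.cos (θ i - θ i0) < 1/2 := hcos i i0 hine
  have : Real.cos (φ i) = Real.cos (2 * Real.pi - φ i) := (Real.cos_two_pi_sub _).symm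
  have hhalf : (1:ℝ)/2 ≤ Real.cos (φ i) := by
    rw [this]
    rw [← Real.cos_pi_div_three]
    rcases eq_or_lt_of_le (show 2 * Real.pi - φ i ≤ Real.pi / 3 by linarith) with h | h
    · rw [h]
    · exact le_of_lt (Real.strictAntiOn_cos ⟨by linarith [hφlt i], by linarith⟩
        ⟨by positivity, by linarith⟩ h)
  have : θ i - θ i0 = φ i := by simp only [hφ]
  rw [this] at hcc
  linarith

lemma nbhd_inter_indep_le_five (P : Finset (EuclideanSpace ℝ (Fin 2)))
    (u : ↥P) (X : Set ↥P) (hX : IsIndepSet (unitDiskGraph P) X) (hu : u ∉ X) :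
    (closedNbhd (unitDiskGraph P) u ∩ X).ncard ≤ 5 := by
  by_contra h
  push_neg at h
  obtain ⟨t, hts, htc⟩ := Set.exists_subset_card_eq (show 6 ≤ _ from h)
  have htf : t.Finite := Set.toFinite t
  haveI : Fintype t := htf.fintype
  have hcard : Fintype.card t = 6 := by
    rw [← Nat.card_eq_fintype_card, Nat.card_coe_set_eq, htc]
  let e : Fin 6 ≃ t := (Fintype.equivFinOfCardEq hcard).symm
  have hmem : ∀ i : Fin 6, (e i : ↥P) ∈ closedNbhd (unitDiskGraph P) u ∩ X :=
    fun i => hts (e i).2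
  have hne : ∀ i : Fin 6, (e i : ↥P) ≠ u := by
    intro i h
    exact hu (h ▸ (hmem i).2)
  set f : Fin 6 → ℂ := fun i => toC ((e i : ↥P) : EuclideanSpace ℝ (Fin 2)) - toC u with hf
  have habs : ∀ i, ‖f i‖
      = dist ((e i : ↥P) : EuclideanSpace ℝ (Fin 2)) (u : EuclideanSpace ℝ (Fin 2)) :=
    fun i => abs_toC_sub _ _
  refine key f ?_ ?_ ?_
  · intro i hzero
    have : (0:ℝ) < ‖f i‖ := by
      rw [habs i]
      exact dist_pos.2 (fun hh => hne i (Subtype.coe_injective hh))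
    rw [hzero] at this
    simp at this
  · intro i
    rw [habs i]
    rcases (hmem i).1 with h | h
    · exact absurd h (hne i)
    · exact h.2
  · intro i j hij
    have hne2 : (e i : ↥P) ≠ (e j : ↥P) := by
      intro h
      exact hij (e.injective (Subtype.coe_injective h))
    have hnadj := hX _ (hmem i).2 _ (hmem j).2 hne2
    have hd : ¬ dist ((e i : ↥P) : EuclideanSpace ℝ (Fin 2))
        ((e j : ↥P) : EuclideanSpace ℝ (Fin 2)) ≤ 1 := by
      intro hle
      exact hnadj ⟨hne2, hle⟩
    have : f i - f j = toC ((e i : ↥P) : EuclideanSpace ℝ (Fin 2))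
        - toC ((e j : ↥P) : EuclideanSpace ℝ (Fin 2)) := by
      simp only [hf]
      ring
    rw [this, abs_toC_sub]
    linarith [lt_of_not_ge hd]

theorem closed_nbhd_pair_inter_indep_le_ten
    (P : Finset (EuclideanSpace ℝ (Fin 2)))
    (u v : ↥P) (X : Set ↥P)
    (hX : IsIndepSet (unitDiskGraph P) X)
    (hu : u ∉ X) (hv : v ∉ X) :
    ((closedNbhd (unitDiskGraph P) u ∪ closedNbhd (unitDiskGraph P) v) ∩ X).ncard ≤ 10 := by
  rw [Set.union_inter_distrib_right]
  calc ((closedNbhd (unitDiskGraph P) u ∩ X) ∪ (closedNbhd (unitDiskGraph P) v ∩ X)).ncard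
      ≤ (closedNbhd (unitDiskGraph P) u ∩ X).ncard
        + (closedNbhd (unitDiskGraph P) v ∩ X).ncard := Set.ncard_union_le _ _
    _ ≤ 10 := by
        have h1 := nbhd_inter_indep_le_five P u X hX hu
        have h2 := nbhd_inter_indep_le_five P v X hX hv
        omega
end

section
/- Let G = (V,E) be a finite simple graph. Let I₁ be a maximal independent set of G, I₂ a maximal independent set of the induced subgraph of G on V ∖ I₁, and I₃ a maximal independent set of the induced subgraph of G on V ∖ (I₁ ∪ I₂). Let F ⊆ V be a set such that: (a) for every u ∈ I₁ with N_G(u) ∩ (I₂ ∪ I₃) = ∅, F contains at least one neighbor of u; and (b) for every u ∈ I₁ whose set of neighbors in I₂ ∪ I₃ is a single vertex {v}, F contains some neighbor w of v with w ≠ u. Then D = I₁ ∪ I₂ ∪ I₃ ∪ F is a liar's dominating set of G. -/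
section Aux
variable {V : Type*} (G : SimpleGraph V)

lemma indepSet_insert {I : Set V} (hI : IsIndepSet G I) {v : V}
    (hv : ∀ a ∈ I, ¬ G.Adj v a) : IsIndepSet G (insert v I) := by
  intro x hx y hy hxy
  rcases hx with rfl | hx
  · rcases hy with rfl | hy
    · exact absurd rfl hxy
    · exact hv y hy
  · rcases hy with rfl | hy
    · intro h; exact hv x hx h.symm
    · exact hI x hx y hy hxy

lemma maxIndepOn_nbr {A I : Set V} (h : IsMaxIndepOn G A I) {v : V}
    (hvA : v ∈ A) (hvI : v ∉ I) : ∃ a ∈ I, G.Adj v a := by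
  by_contra hc
  push_neg at hc
  have hind := indepSet_insert G h.2.1 hc
  have hsub : insert v I ⊆ A := Set.insert_subset hvA h.1
  have heq := h.2.2 (insert v I) hsub hind (Set.subset_insert _ _)
  exact hvI (heq ▸ Set.mem_insert v I)

lemma mem_closedNbhd_self (v : V) : v ∈ closedNbhd G v := Or.inl rfl

lemma adj_mem_closedNbhd {u v : V} (h : G.Adj v u) : u ∈ closedNbhd G v :=
  Or.inr h.symm

end Aux

theorem three_maxIndep_with_fixes_is_LDS
    {V : Type*} [Fintype V] (G : SimpleGraph V)
    (I₁ I₂ I₃ F : Set V)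
    (h1 : IsMaxIndep G I₁)
    (h2 : IsMaxIndepOn G (Set.univ \ I₁) I₂)
    (h3 : IsMaxIndepOn G (Set.univ \ (I₁ ∪ I₂)) I₃)
    (hF : F ⊆ Set.univ)
    (ha : ∀ u ∈ I₁, G.neighborSet u ∩ (I₂ ∪ I₃) = ∅ → ∃ w ∈ F, G.Adj u w)
    (hb : ∀ u ∈ I₁, ∀ v, G.neighborSet u ∩ (I₂ ∪ I₃) = {v} →
      ∃ w ∈ F, w ≠ u ∧ G.Adj v w) :
    IsLDS G (I₁ ∪ I₂ ∪ I₃ ∪ F) := by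
  set D : Set V := I₁ ∪ I₂ ∪ I₃ ∪ F with hD
  -- membership in D
  have hD1 : I₁ ⊆ D := fun x hx => Or.inl (Or.inl (Or.inl hx))
  have hD2 : I₂ ⊆ D := fun x hx => Or.inl (Or.inl (Or.inr hx))
  have hD3 : I₃ ⊆ D := fun x hx => Or.inl (Or.inr hx)
  have hDF : F ⊆ D := fun x hx => Or.inr hx
  -- disjointness facts
  have h21 : ∀ x ∈ I₂, x ∉ I₁ := fun x hx => (h2.1 hx).2
  have h31 : ∀ x ∈ I₃, x ∉ I₁ := fun x hx => fun h => (h3.1 hx).2 (Or.inl h)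
  have h32 : ∀ x ∈ I₃, x ∉ I₂ := fun x hx => fun h => (h3.1 hx).2 (Or.inr h)
  -- neighbors from maximality
  have nbr1 : ∀ v, v ∉ I₁ → ∃ a ∈ I₁, G.Adj v a := fun v hv =>
    maxIndepOn_nbr G h1 (Set.mem_univ v) hv
  have nbr2 : ∀ v, v ∉ I₁ → v ∉ I₂ → ∃ a ∈ I₂, G.Adj v a := fun v hv1 hv2 =>
    maxIndepOn_nbr G h2 ⟨Set.mem_univ v, hv1⟩ hv2
  have nbr3 : ∀ v, v ∉ I₁ → v ∉ I₂ → v ∉ I₃ → ∃ a ∈ I₃, G.Adj v a :=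
    fun v hv1 hv2 hv3 =>
      maxIndepOn_nbr G h3 ⟨Set.mem_univ v, fun h => h.elim hv1 hv2⟩ hv3
  -- every vertex has two distinct elements of D in its closed neighborhood
  have hpair : ∀ v : V, ∃ a b, a ≠ b ∧ a ∈ closedNbhd G v ∩ D ∧
      b ∈ closedNbhd G v ∩ D := by
    intro v
    by_cases hv1 : v ∈ I₁
    · rcases Set.eq_empty_or_nonempty (G.neighborSet v ∩ (I₂ ∪ I₃)) with he | hne
      · obtain ⟨w, hwF, hw⟩ := ha v hv1 he
        exact ⟨v, w, hw.ne, ⟨mem_closedNbhd_self G v, hD1 hv1⟩,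
          ⟨adj_mem_closedNbhd G hw, hDF hwF⟩⟩
      · obtain ⟨x, hxN, hx23⟩ := hne
        have hxD : x ∈ D := hx23.elim (fun h => hD2 h) (fun h => hD3 h)
        exact ⟨v, x, hxN.ne, ⟨mem_closedNbhd_self G v, hD1 hv1⟩,
          ⟨adj_mem_closedNbhd G hxN, hxD⟩⟩
    · obtain ⟨a, ha1, hva⟩ := nbr1 v hv1
      by_cases hv2 : v ∈ I₂
      · exact ⟨a, v, fun h => hv1 (h ▸ ha1),
          ⟨adj_mem_closedNbhd G hva, hD1 ha1⟩,
          ⟨mem_closedNbhd_self G v, hD2 hv2⟩⟩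
      by_cases hv3 : v ∈ I₃
      · exact ⟨a, v, fun h => hv1 (h ▸ ha1),
          ⟨adj_mem_closedNbhd G hva, hD1 ha1⟩,
          ⟨mem_closedNbhd_self G v, hD3 hv3⟩⟩
      · obtain ⟨c, hc3, hvc⟩ := nbr3 v hv1 hv2 hv3
        exact ⟨a, c, fun h => h31 c hc3 (h ▸ ha1),
          ⟨adj_mem_closedNbhd G hva, hD1 ha1⟩,
          ⟨adj_mem_closedNbhd G hvc, hD3 hc3⟩⟩
  -- every vertex outside I₁ ∪ I₂ ∪ I₃ has three distinct dominators
  have htrip : ∀ v : V, v ∉ I₁ → v ∉ I₂ → v ∉ I₃ →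
      ∃ a b c, a ≠ b ∧ a ≠ c ∧ b ≠ c ∧ a ∈ closedNbhd G v ∩ D ∧
        b ∈ closedNbhd G v ∩ D ∧ c ∈ closedNbhd G v ∩ D := by
    intro v hv1 hv2 hv3
    obtain ⟨a, ha1, hva⟩ := nbr1 v hv1
    obtain ⟨b, hb2, hvb⟩ := nbr2 v hv1 hv2
    obtain ⟨c, hc3, hvc⟩ := nbr3 v hv1 hv2 hv3
    exact ⟨a, b, c, fun h => h21 b hb2 (h ▸ ha1), fun h => h31 c hc3 (h ▸ ha1),
      fun h => h32 c hc3 (h ▸ hb2),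
      ⟨adj_mem_closedNbhd G hva, hD1 ha1⟩,
      ⟨adj_mem_closedNbhd G hvb, hD2 hb2⟩,
      ⟨adj_mem_closedNbhd G hvc, hD3 hc3⟩⟩
  constructor
  · intro v _
    obtain ⟨a, b, hab, haS, hbS⟩ := hpair v
    calc (2 : ℕ) = ({a, b} : Set V).ncard := (Set.ncard_pair hab).symm
      _ ≤ _ := Set.ncard_le_ncard (by
          intro x hx; rcases hx with rfl | rfl
          exacts [haS, hbS]) (Set.toFinite _)
  · intro u _ v _ huv
    set S : Set V := (closedNbhd G u ∪ closedNbhd G v) ∩ D with hS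
    have hsubu : closedNbhd G u ∩ D ⊆ S :=
      Set.inter_subset_inter_left D Set.subset_union_left
    have hsubv : closedNbhd G v ∩ D ⊆ S :=
      Set.inter_subset_inter_left D Set.subset_union_right
    -- if some vertex is outside I₁ ∪ I₂ ∪ I₃, we get three dominators
    have htripS : ∀ w : V, w ∉ I₁ → w ∉ I₂ → w ∉ I₃ →
        closedNbhd G w ∩ D ⊆ S → 3 ≤ S.ncard := by
      intro w hw1 hw2 hw3 hws
      obtain ⟨a, b, c, hab, hac, hbc, haS, hbS, hcS⟩ := htrip w hw1 hw2 hw3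
      calc (3 : ℕ) = ({a, b, c} : Set V).ncard :=
            (Set.ncard_eq_three.mpr ⟨a, b, c, hab, hac, hbc, rfl⟩).symm
        _ ≤ _ := Set.ncard_le_ncard (by
            intro x hx; rcases hx with rfl | rfl | rfl
            exacts [hws haS, hws hbS, hws hcS]) (Set.toFinite _)
    by_cases hu123 : u ∉ I₁ ∧ u ∉ I₂ ∧ u ∉ I₃
    · exact htripS u hu123.1 hu123.2.1 hu123.2.2 hsubu
    by_cases hv123 : v ∉ I₁ ∧ v ∉ I₂ ∧ v ∉ I₃
    · exact htripS v hv123.1 hv123.2.1 hv123.2.2 hsubv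
    -- both u and v are in I₁ ∪ I₂ ∪ I₃ ⊆ D
    push_neg at hu123 hv123
    have huD : u ∈ D := by
      by_cases h1' : u ∈ I₁
      · exact hD1 h1'
      by_cases h2' : u ∈ I₂
      · exact hD2 h2'
      · exact hD3 (hu123 h1' h2')
    have hvD : v ∈ D := by
      by_cases h1' : v ∈ I₁
      · exact hD1 h1'
      by_cases h2' : v ∈ I₂
      · exact hD2 h2'
      · exact hD3 (hv123 h1' h2')
    by_contra hlt
    push_neg at hlt
    have hsub2 : ({u, v} : Set V) ⊆ S := by
      intro x hx; rcases hx with rfl | rfl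
      · exact ⟨Or.inl (mem_closedNbhd_self G x), huD⟩
      · exact ⟨Or.inr (mem_closedNbhd_self G x), hvD⟩
    have hSeq : ({u, v} : Set V) = S := by
      apply Set.eq_of_subset_of_ncard_le hsub2 _ (Set.toFinite _)
      rw [Set.ncard_pair huv]
      omega
    have hSu : closedNbhd G u ∩ D ⊆ ({u, v} : Set V) := hSeq ▸ hsubu
    have hSv : closedNbhd G v ∩ D ⊆ ({u, v} : Set V) := hSeq ▸ hsubv
    -- key claim: impossible that x ∈ I₁ and both neighborhoods confined to {x,y}
    have key : ∀ x y : V, x ≠ y → x ∈ I₁ →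
        closedNbhd G x ∩ D ⊆ ({x, y} : Set V) →
        closedNbhd G y ∩ D ⊆ ({x, y} : Set V) → False := by
      intro x y hxy hx1 hSx hSy
      -- from hpair x: y ∈ closedNbhd x ∩ D
      obtain ⟨a, b, hab, haS, hbS⟩ := hpair x
      have hyN : y ∈ closedNbhd G x ∩ D := by
        rcases hSx haS with rfl | rfl
        · rcases hSx hbS with rfl | rfl
          · exact absurd rfl hab
          · exact hbS
        · exact haS
      have hyadj : G.Adj y x := hyN.1.resolve_left (Ne.symm hxy ∘ id)
      have hyD : y ∈ D := hyN.2
      by_cases hy23 : y ∈ I₂ ∪ I₃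
      · -- neighbor set of x in I₂ ∪ I₃ is exactly {y}
        have hset : G.neighborSet x ∩ (I₂ ∪ I₃) = {y} := by
          apply Set.eq_of_subset_of_subset
          · intro z hz
            have hzD : z ∈ D := hz.2.elim (fun h => hD2 h) (fun h => hD3 h)
            have hzS : z ∈ ({x, y} : Set V) :=
              hSx ⟨adj_mem_closedNbhd G hz.1, hzD⟩
            rcases hzS with rfl | rfl
            · exact absurd rfl (G.ne_of_adj hz.1).symm
            · rfl
          · intro z hz
            rw [Set.mem_singleton_iff] at hz
            subst hz
            exact ⟨hyadj.symm, hy23⟩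
        obtain ⟨w, hwF, hwx, hwy⟩ := hb x hx1 y hset
        have hwS : w ∈ ({x, y} : Set V) :=
          hSy ⟨adj_mem_closedNbhd G hwy, hDF hwF⟩
        rcases hwS with rfl | rfl
        · exact hwx rfl
        · exact G.loopless.irrefl w hwy
      · -- y ∉ I₂ ∪ I₃; y ∈ I₁ would contradict independence of I₁
        have hy1 : y ∉ I₁ := by
          intro hy1
          exact h1.2.1 x hx1 y hy1 hxy hyadj.symm
        have hy2 : y ∉ I₂ := fun h => hy23 (Or.inl h)
        have hy3 : y ∉ I₃ := fun h => hy23 (Or.inr h)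
        obtain ⟨c, hc3, hyc⟩ := nbr3 y hy1 hy2 hy3
        have hcS : c ∈ ({x, y} : Set V) :=
          hSy ⟨adj_mem_closedNbhd G hyc, hD3 hc3⟩
        rcases hcS with rfl | rfl
        · exact h31 c hc3 hx1
        · exact G.loopless.irrefl c hyc
    by_cases hu1 : u ∈ I₁
    · exact key u v huv hu1 hSu hSv
    · -- u ∉ I₁ forces v ∈ I₁
      have hv1 : v ∈ I₁ := by
        obtain ⟨a, ha1, hua⟩ := nbr1 u hu1
        have haS : a ∈ ({u, v} : Set V) :=
          hSu ⟨adj_mem_closedNbhd G hua, hD1 ha1⟩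
        rcases haS with rfl | rfl
        · exact absurd ha1 hu1
        · exact ha1
      have hSu' : closedNbhd G u ∩ D ⊆ ({v, u} : Set V) := by
        intro z hz; exact (hSu hz).elim (fun h => Or.inr h) (fun h => Or.inl h)
      have hSv' : closedNbhd G v ∩ D ⊆ ({v, u} : Set V) := by
        intro z hz; exact (hSv hz).elim (fun h => Or.inr h) (fun h => Or.inl h)
      exact key v u huv.symm hv1 hSv' hSu'
end

section
/- Let G = (V,E) be the unit disk graph on a finite set P of points in the plane, and suppose G admits a liar's dominating set. Let S₁, …, S_k ⊆ V be subsets with |S_i| ≥ 3 for each i and δ_G(S_i, S_j) > 4 for all i ≠ j (a 4-separated collection). Let D* be a minimum-cardinality liar's dominating set of V in G, and for each i let D_i be a minimum-cardinality liar's dominating set of S_i in G. Then Σ_{i=1}^{k} |D_i| ≤ |D*|. -/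
theorem four_separated_sum_le_opt
    (P : Finset (EuclideanSpace ℝ (Fin 2)))
    (hex : ∃ D : Set ↥P, IsLDS (unitDiskGraph P) D)
    (k : ℕ) (S : Fin k → Set ↥P)
    (hsize : ∀ i, 3 ≤ (S i).ncard)
    (hsep : ∀ i j, i ≠ j → ∀ u ∈ S i, ∀ v ∈ S j,
      (unitDiskGraph P).Reachable u v → 4 < (unitDiskGraph P).dist u v)
    (Dstar : Set ↥P)
    (hDstar : IsLDS (unitDiskGraph P) Dstar)
    (hDstarMin : ∀ D : Set ↥P, IsLDS (unitDiskGraph P) D → Dstar.ncard ≤ D.ncard)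
    (D : Fin k → Set ↥P)
    (hD : ∀ i, IsLDSOn (unitDiskGraph P) (S i) (D i))
    (hDmin : ∀ i, ∀ D' : Set ↥P, IsLDSOn (unitDiskGraph P) (S i) D' →
      (D i).ncard ≤ D'.ncard) :
    ∑ i, (D i).ncard ≤ Dstar.ncard := by
  classical
  set G := unitDiskGraph P with hG
  -- restriction of Dstar near S i
  set E : Fin k → Set ↥P := fun i => Dstar ∩ ⋃ v ∈ S i, closedNbhd G v with hE
  -- each E i is an LDS of S i
  have hELDS : ∀ i, IsLDSOn G (S i) (E i) := by
    intro i
    constructor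
    · intro v hv
      have hsub : closedNbhd G v ∩ Dstar ⊆ closedNbhd G v ∩ E i := by
        intro x hx
        exact ⟨hx.1, hx.2, Set.mem_biUnion hv hx.1⟩
      calc 2 ≤ (closedNbhd G v ∩ Dstar).ncard := hDstar.1 v (Set.mem_univ v)
        _ ≤ (closedNbhd G v ∩ E i).ncard :=
          Set.ncard_le_ncard hsub (Set.toFinite _)
    · intro u hu v hv huv
      have hsub : (closedNbhd G u ∪ closedNbhd G v) ∩ Dstar ⊆
          (closedNbhd G u ∪ closedNbhd G v) ∩ E i := by
        intro x hx
        rcases hx with ⟨hx1, hx2⟩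
        refine ⟨hx1, hx2, ?_⟩
        rcases hx1 with h | h
        · exact Set.mem_biUnion hu h
        · exact Set.mem_biUnion hv h
      calc 3 ≤ ((closedNbhd G u ∪ closedNbhd G v) ∩ Dstar).ncard :=
          hDstar.2 u (Set.mem_univ u) v (Set.mem_univ v) huv
        _ ≤ ((closedNbhd G u ∪ closedNbhd G v) ∩ E i).ncard :=
          Set.ncard_le_ncard hsub (Set.toFinite _)
  -- pairwise disjointness of the E i
  have hdisj : ∀ i j, i ≠ j → Disjoint (E i) (E j) := by
    intro i j hij
    rw [Set.disjoint_left]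
    rintro x ⟨-, hx1⟩ ⟨-, hx2⟩
    obtain ⟨u, hu, hxu⟩ := Set.mem_iUnion₂.mp hx1
    obtain ⟨v, hv, hxv⟩ := Set.mem_iUnion₂.mp hx2
    -- build a walk from u to v of length ≤ 2
    have hw : ∃ w : G.Walk u v, w.length ≤ 2 := by
      rcases hxu with rfl | hadj1
      · rcases hxv with rfl | hadj2
        · exact ⟨SimpleGraph.Walk.nil, by simp⟩
        · exact ⟨SimpleGraph.Walk.cons hadj2 SimpleGraph.Walk.nil, by simp⟩
      · rcases hxv with rfl | hadj2
        · exact ⟨SimpleGraph.Walk.cons hadj1.symm SimpleGraph.Walk.nil, by simp⟩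
        · exact ⟨SimpleGraph.Walk.cons hadj1.symm
            (SimpleGraph.Walk.cons hadj2 SimpleGraph.Walk.nil), by simp⟩
    obtain ⟨w, hwlen⟩ := hw
    have hreach : G.Reachable u v := ⟨w⟩
    have hdlt : G.dist u v ≤ 2 := le_trans (SimpleGraph.dist_le w) hwlen
    have := hsep i j hij u hu v hv hreach
    omega
  -- sum up
  have hle : ∀ i, (D i).ncard ≤ (E i).ncard := fun i => hDmin i (E i) (hELDS i)
  have hsum : ∑ i, (E i).ncard ≤ Dstar.ncard := by
    have hf : ∀ (A : Set ↥P), A.Finite := fun A => Set.toFinite A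
    calc ∑ i, (E i).ncard = ∑ i, (hf (E i)).toFinset.card := by
          exact Finset.sum_congr rfl fun i _ => Set.ncard_eq_toFinset_card _ (hf (E i))
      _ = (Finset.univ.biUnion fun i => (hf (E i)).toFinset).card := by
          rw [Finset.card_biUnion]
          intro i _ j _ hij
          rw [Function.onFun, Finset.disjoint_left]
          intro x hx hx'
          rw [Set.Finite.mem_toFinset] at hx hx'
          exact Set.disjoint_left.mp (hdisj i j hij) hx hx'
      _ ≤ (hf Dstar).toFinset.card := by
          apply Finset.card_le_card
          intro x hx
          obtain ⟨i, -, hxi⟩ := Finset.mem_biUnion.mp hx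
          rw [Set.Finite.mem_toFinset] at hxi ⊢
          exact hxi.1
      _ = Dstar.ncard := (Set.ncard_eq_toFinset_card _ (hf Dstar)).symm
  calc ∑ i, (D i).ncard ≤ ∑ i, (E i).ncard := Finset.sum_le_sum fun i _ => hle i
    _ ≤ Dstar.ncard := hsum
end

section
/- Let G = (V,E) be the unit disk graph on a finite set P of points in the plane, and suppose G admits a liar's dominating set. Let S₁, …, S_k ⊆ V be subsets with |S_i| ≥ 3 for each i and δ_G(S_i, S_j) > 4 for all i ≠ j, and let N₁, …, N_k ⊆ V be sets with S_i ⊆ N_i for each i. Let ρ ≥ 1 be a real number such that for every i, the minimum cardinality of a liar's dominating set of N_i in G is at most ρ times the minimum cardinality of a liar's dominating set of S_i in G. Then Σ_{i=1}^{k} |D_opt(N_i)| ≤ ρ·|D_opt(V)|, where D_opt(N_i) is a minimum-cardinality liar's dominating set of N_i in G and D_opt(V) is a minimum-cardinality liar's dominating set of V in G. -/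
theorem four_separated_sum_le_rho_opt
    (P : Finset (EuclideanSpace ℝ (Fin 2)))
    (hex : ∃ D : Set ↥P, IsLDS (unitDiskGraph P) D)
    (k : ℕ) (S N : Fin k → Set ↥P)
    (hsize : ∀ i, 3 ≤ (S i).ncard)
    (hsep : ∀ i j, i ≠ j → ∀ u ∈ S i, ∀ v ∈ S j,
      (unitDiskGraph P).Reachable u v → 4 < (unitDiskGraph P).dist u v)
    (hSN : ∀ i, S i ⊆ N i)
    (ρ : ℝ) (hρ : 1 ≤ ρ)
    (DS : Fin k → Set ↥P)
    (hDS : ∀ i, IsLDSOn (unitDiskGraph P) (S i) (DS i))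
    (hDSmin : ∀ i, ∀ D' : Set ↥P, IsLDSOn (unitDiskGraph P) (S i) D' →
      (DS i).ncard ≤ D'.ncard)
    (DN : Fin k → Set ↥P)
    (hDN : ∀ i, IsLDSOn (unitDiskGraph P) (N i) (DN i))
    (hDNmin : ∀ i, ∀ D' : Set ↥P, IsLDSOn (unitDiskGraph P) (N i) D' →
      (DN i).ncard ≤ D'.ncard)
    (hrho : ∀ i, ((DN i).ncard : ℝ) ≤ ρ * (DS i).ncard)
    (Dopt : Set ↥P)
    (hDopt : IsLDS (unitDiskGraph P) Dopt)
    (hDoptMin : ∀ D : Set ↥P, IsLDS (unitDiskGraph P) D → Dopt.ncard ≤ D.ncard) :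
    (∑ i, ((DN i).ncard : ℝ)) ≤ ρ * Dopt.ncard := by
  classical
  set G := unitDiskGraph P with hG
  -- The localized pieces of Dopt
  set B : Fin k → Set ↥P := fun i => {d | d ∈ Dopt ∧ ∃ v ∈ S i, d ∈ closedNbhd G v} with hB
  have hBsub : ∀ i, B i ⊆ Dopt := fun i d hd => hd.1
  -- each B i is an LDS of S i
  have hBLDS : ∀ i, IsLDSOn G (S i) (B i) := by
    intro i
    constructor
    · intro v hv
      have : closedNbhd G v ∩ Dopt ⊆ closedNbhd G v ∩ B i := by
        rintro x ⟨hx1, hx2⟩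
        exact ⟨hx1, hx2, v, hv, hx1⟩
      calc 2 ≤ (closedNbhd G v ∩ Dopt).ncard := hDopt.1 v (Set.mem_univ v)
        _ ≤ (closedNbhd G v ∩ B i).ncard := Set.ncard_le_ncard this (Set.toFinite _)
    · intro u hu v hv huv
      have : (closedNbhd G u ∪ closedNbhd G v) ∩ Dopt ⊆
          (closedNbhd G u ∪ closedNbhd G v) ∩ B i := by
        rintro x ⟨hx1, hx2⟩
        rcases hx1 with h | h
        · exact ⟨Or.inl h, hx2, u, hu, h⟩
        · exact ⟨Or.inr h, hx2, v, hv, h⟩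
      calc 3 ≤ ((closedNbhd G u ∪ closedNbhd G v) ∩ Dopt).ncard :=
            hDopt.2 u (Set.mem_univ u) v (Set.mem_univ v) huv
        _ ≤ _ := Set.ncard_le_ncard this (Set.toFinite _)
  -- pairwise disjoint
  have hdisj : ∀ i j, i ≠ j → Disjoint (B i) (B j) := by
    intro i j hij
    rw [Set.disjoint_left]
    rintro d ⟨_, u, hu, hdu⟩ ⟨_, v, hv, hdv⟩
    -- walks u → d and d → v
    have wud : ∃ w : G.Walk u d, w.length ≤ 1 := by
      rcases hdu with h | h
      · subst h; exact ⟨SimpleGraph.Walk.nil, by simp⟩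
      · exact ⟨SimpleGraph.Walk.cons h.symm SimpleGraph.Walk.nil, by simp⟩
    have wdv : ∃ w : G.Walk d v, w.length ≤ 1 := by
      rcases hdv with h | h
      · subst h; exact ⟨SimpleGraph.Walk.nil, by simp⟩
      · exact ⟨SimpleGraph.Walk.cons h SimpleGraph.Walk.nil, by simp⟩
    obtain ⟨w1, hw1⟩ := wud
    obtain ⟨w2, hw2⟩ := wdv
    have hreach : G.Reachable u v := ⟨w1.append w2⟩
    have hle : G.dist u v ≤ 2 := by
      have h := SimpleGraph.dist_le (w1.append w2)
      rw [SimpleGraph.Walk.length_append] at h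
      omega
    exact absurd hle (by have := hsep i j hij u hu v hv hreach; omega)
  -- sum of sizes of B i ≤ |Dopt|
  have key : ∑ i, (B i).ncard ≤ Dopt.ncard := by
    calc ∑ i, (B i).ncard = ∑ i, ((B i).toFinite.toFinset).card := by
          exact Finset.sum_congr rfl fun i _ => by rw [Set.ncard_eq_toFinset_card]
      _ = (Finset.univ.biUnion fun i => (B i).toFinite.toFinset).card := by
          rw [Finset.card_biUnion]
          intro i _ j _ hij
          have := hdisj i j hij
          rw [Function.onFun, Finset.disjoint_left]
          intro a ha hb
          rw [Set.Finite.mem_toFinset] at ha hb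
          exact (Set.disjoint_left.mp this ha) hb
      _ ≤ (Dopt.toFinite.toFinset).card := by
          apply Finset.card_le_card
          intro a ha
          simp only [Finset.mem_biUnion, Set.Finite.mem_toFinset] at ha ⊢
          obtain ⟨i, _, hai⟩ := ha
          exact hBsub i hai
      _ = Dopt.ncard := (Set.ncard_eq_toFinset_card _ _).symm
  have hS_le_B : ∀ i, (DS i).ncard ≤ (B i).ncard := fun i => hDSmin i (B i) (hBLDS i)
  have hsum : (∑ i, ((DS i).ncard : ℝ)) ≤ (Dopt.ncard : ℝ) := by
    have h1 : ∑ i, (DS i).ncard ≤ ∑ i, (B i).ncard :=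
      Finset.sum_le_sum fun i _ => hS_le_B i
    exact_mod_cast h1.trans key
  calc (∑ i, ((DN i).ncard : ℝ)) ≤ ∑ i, ρ * ((DS i).ncard : ℝ) :=
        Finset.sum_le_sum fun i _ => hrho i
    _ = ρ * ∑ i, ((DS i).ncard : ℝ) := by rw [Finset.mul_sum]
    _ ≤ ρ * Dopt.ncard := by
        apply mul_le_mul_of_nonneg_left hsum (le_trans zero_le_one hρ)
end

section
/- Let G = (V,E) be a finite simple graph, let D be a liar's dominating set of G, and let S ⊆ V. Define S' = {u ∈ V : δ_G(u,v) ≤ 2 for some v ∈ S}. Then D ∩ S' is a liar's dominating set of S in G. -/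
lemma mem_closedNbhd_ball {V : Type*} (G : SimpleGraph V) {u v : V}
    (h : u ∈ closedNbhd G v) : G.Reachable u v ∧ G.dist u v ≤ 2 := by
  rcases h with h | h
  · subst h; exact ⟨.refl u, by rw [SimpleGraph.dist_self]; norm_num⟩
  · exact ⟨h.reachable, le_trans (G.dist_le h.toWalk) (by simp)⟩

theorem lds_inter_two_ball_is_lds_on
    {V : Type*} [Fintype V] (G : SimpleGraph V)
    (D : Set V) (hD : IsLDS G D) (S : Set V) :
    IsLDSOn G S
      (D ∩ {u | ∃ v ∈ S, G.Reachable u v ∧ G.dist u v ≤ 2}) := by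
  constructor
  · intro v hv
    have heq : closedNbhd G v ∩ (D ∩ {u | ∃ w ∈ S, G.Reachable u w ∧ G.dist u w ≤ 2})
        = closedNbhd G v ∩ D := by
      ext u
      constructor
      · rintro ⟨h1, h2, _⟩; exact ⟨h1, h2⟩
      · rintro ⟨h1, h2⟩
        exact ⟨h1, h2, v, hv, mem_closedNbhd_ball G h1⟩
    rw [heq]
    exact hD.1 v (Set.mem_univ v)
  · intro u hu v hv huv
    have heq : (closedNbhd G u ∪ closedNbhd G v) ∩
        (D ∩ {w | ∃ x ∈ S, G.Reachable w x ∧ G.dist w x ≤ 2})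
        = (closedNbhd G u ∪ closedNbhd G v) ∩ D := by
      ext w
      constructor
      · rintro ⟨h1, h2, _⟩; exact ⟨h1, h2⟩
      · rintro ⟨h1 | h1, h2⟩
        · exact ⟨Or.inl h1, h2, u, hu, mem_closedNbhd_ball G h1⟩
        · exact ⟨Or.inr h1, h2, v, hv, mem_closedNbhd_ball G h1⟩
    rw [heq]
    exact hD.2 u (Set.mem_univ u) v (Set.mem_univ v) huv
end
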